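/- For every natural number n and every real x, the finite Fourier transform of the n-th Legendre polynomial satisfies ∫_{-1}^{1} e^{i x t} P_n(t) dt = 2 i^n j_n(x). -/

import Mathlib

open MeasureTheory Real Complex

/-- Spherical Bessel function of the first kind (Poisson integral representation). -/
noncomputable def sphBessel (n : ℕ) (x : ℝ) : ℝ :=
  x ^ n / (2 ^ (n + 1) * (n.factorial : ℝ)) *
    ∫ θ in (0:ℝ)..Real.pi, Real.cos (x * Real.cos θ) * Real.sin θ ^ (2 * n + 1)

/-- Legendre polynomial via the Rodrigues formula. -/
noncomputable def legendreP (n : ℕ) : Polynomial ℝ :=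
  ((1 : ℝ) / (2 ^ n * (n.factorial : ℝ))) •
    (Polynomial.derivative^[n] ((Polynomial.X ^ 2 - 1) ^ n))

open Polynomial intervalIntegral in
lemma aux_boundary (n m : ℕ) (hm : m < n) (s : ℝ) (hs : s = 1 ∨ s = -1) :
    (Polynomial.derivative^[m] ((X ^ 2 - 1 : Polynomial ℝ) ^ n)).eval s = 0 := by
  have hp : ((X ^ 2 - 1 : Polynomial ℝ) ^ n) ≠ 0 := by
    apply pow_ne_zero
    intro h
    have := congrArg (Polynomial.eval (0:ℝ)) h
    simp at this
  have hdvd : (X - Polynomial.C s) ∣ (X ^ 2 - 1 : Polynomial ℝ) := by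
    have : (X ^ 2 - 1 : Polynomial ℝ) = (X - Polynomial.C 1) * (X + Polynomial.C 1) := by ring_nf; simp [Polynomial.C_1]; ring
    rcases hs with rfl | rfl
    · rw [this]; exact Dvd.intro _ rfl
    · rw [this]
      have : (X - Polynomial.C (-1 : ℝ)) = X + Polynomial.C 1 := by simp [sub_neg_eq_add]
      rw [this]; exact Dvd.intro_left _ rfl
  have hle : n ≤ rootMultiplicity s ((X ^ 2 - 1 : Polynomial ℝ) ^ n) :=
    (Polynomial.le_rootMultiplicity_iff hp).2 (pow_dvd_pow_of_dvd hdvd n)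
  exact Polynomial.isRoot_iterate_derivative_of_lt_rootMultiplicity (lt_of_lt_of_le hm hle)

open Polynomial intervalIntegral in
lemma aux_ibp (x : ℝ) (p : Polynomial ℝ) :
    ∫ t in (-1:ℝ)..1, Complex.exp (Complex.I * x * t) * (((Polynomial.derivative p).eval t : ℝ) : ℂ)
      = (Complex.exp (Complex.I * x) * (p.eval 1 : ℝ)
          - Complex.exp (-(Complex.I * x)) * (p.eval (-1) : ℝ))
        - Complex.I * x * ∫ t in (-1:ℝ)..1, Complex.exp (Complex.I * x * t) * ((p.eval t : ℝ) : ℂ) := by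
  have hder : ∀ t ∈ Set.uIcc (-1:ℝ) 1,
      HasDerivAt (fun t : ℝ => Complex.exp (Complex.I * x * t) * ((p.eval t : ℝ) : ℂ))
        (Complex.I * x * Complex.exp (Complex.I * x * t) * ((p.eval t : ℝ) : ℂ)
          + Complex.exp (Complex.I * x * t) * (((Polynomial.derivative p).eval t : ℝ) : ℂ)) t := by
    intro t _
    have h1 : HasDerivAt (fun t : ℝ => Complex.exp (Complex.I * x * t))
        (Complex.I * x * Complex.exp (Complex.I * x * t)) t := by
      have : HasDerivAt (fun t : ℝ => Complex.I * x * t) (Complex.I * x) t := by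
        simpa using (Complex.ofRealCLM.hasDerivAt (x := t)).const_mul (Complex.I * x)
      simpa [mul_comm, Function.comp_def] using (Complex.hasDerivAt_exp _).comp_of_eq t this rfl
    have h2 : HasDerivAt (fun t : ℝ => ((p.eval t : ℝ) : ℂ))
        (((Polynomial.derivative p).eval t : ℝ) : ℂ) t :=
      (p.hasDerivAt t).ofReal_comp
    exact h1.mul h2
  have hcont1 : Continuous fun t : ℝ => Complex.exp (Complex.I * x * t) :=
    Complex.continuous_exp.comp (by continuity)
  have hcont2 : Continuous fun t : ℝ => ((p.eval t : ℝ) : ℂ) :=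
    Complex.continuous_ofReal.comp p.continuous
  have hcont3 : Continuous fun t : ℝ => (((Polynomial.derivative p).eval t : ℝ) : ℂ) :=
    Complex.continuous_ofReal.comp (Polynomial.derivative p).continuous
  have hint : IntervalIntegrable (fun t : ℝ =>
      Complex.I * x * Complex.exp (Complex.I * x * t) * ((p.eval t : ℝ) : ℂ)
        + Complex.exp (Complex.I * x * t) * (((Polynomial.derivative p).eval t : ℝ) : ℂ))
      volume (-1) 1 :=
    (Continuous.add (by fun_prop) (by fun_prop)).intervalIntegrable _ _
  have key := integral_eq_sub_of_hasDerivAt hder hint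
  rw [integral_add ((Continuous.intervalIntegrable (by fun_prop) _ _))
    ((Continuous.intervalIntegrable (by fun_prop) _ _))] at key
  have : (∫ t in (-1:ℝ)..1, Complex.I * x * Complex.exp (Complex.I * x * t) * ((p.eval t : ℝ) : ℂ))
      = Complex.I * x * ∫ t in (-1:ℝ)..1, Complex.exp (Complex.I * x * t) * ((p.eval t : ℝ) : ℂ) := by
    simp only [mul_assoc]
    rw [intervalIntegral.integral_const_mul, intervalIntegral.integral_const_mul]
  rw [this] at key
  have h1 : Complex.I * x * (1:ℝ) = Complex.I * x := by simp
  have h2 : Complex.I * x * ((-1:ℝ):ℂ) = -(Complex.I * x) := by push_cast; ring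
  rw [h1, h2] at key
  linear_combination key

open Polynomial intervalIntegral in
lemma aux_iter (n : ℕ) (x : ℝ) : ∀ m, m ≤ n →
    (∫ t in (-1:ℝ)..1, Complex.exp (Complex.I * x * t)
        * (((Polynomial.derivative^[m] ((X ^ 2 - 1 : Polynomial ℝ) ^ n)).eval t : ℝ) : ℂ))
      = (-(Complex.I * x)) ^ m *
        ∫ t in (-1:ℝ)..1, Complex.exp (Complex.I * x * t)
          * (((((X ^ 2 - 1 : Polynomial ℝ) ^ n)).eval t : ℝ) : ℂ) := by
  intro m
  induction m with
  | zero => intro _; simp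
  | succ m ih =>
    intro hm
    have hm' : m < n := hm
    rw [Function.iterate_succ_apply']
    rw [aux_ibp x (Polynomial.derivative^[m] ((X ^ 2 - 1 : Polynomial ℝ) ^ n))]
    rw [aux_boundary n m hm' 1 (Or.inl rfl), aux_boundary n m hm' (-1) (Or.inr rfl)]
    rw [ih (le_of_lt hm')]
    push_cast
    ring

open Polynomial intervalIntegral in
lemma aux_odd (n : ℕ) (x : ℝ) :
    (∫ t in (-1:ℝ)..1, Real.sin (x*t) * (1-t^2)^n) = 0 := by
  have h := intervalIntegral.integral_comp_neg (a := (-1:ℝ)) (b := 1)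
    (f := fun t => Real.sin (x*t) * (1-t^2)^n)
  simp only [neg_neg] at h
  have h2 : (fun t : ℝ => Real.sin (x * -t) * (1 - (-t)^2)^n)
      = fun t => -(Real.sin (x*t) * (1-t^2)^n) := by
    funext t; rw [mul_neg, Real.sin_neg, neg_sq]; ring
  rw [h2, intervalIntegral.integral_neg] at h
  linarith

open Polynomial intervalIntegral in
lemma aux_exp (n : ℕ) (x : ℝ) :
    (∫ t in (-1:ℝ)..1, Complex.exp (Complex.I * x * t) * (((t^2-1)^n : ℝ) : ℂ))
      = (-1:ℂ)^n * ((∫ t in (-1:ℝ)..1, Real.cos (x*t) * (1-t^2)^n : ℝ) : ℂ) := by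
  have hfun : (fun t : ℝ => Complex.exp (Complex.I * x * t) * (((t^2-1)^n : ℝ) : ℂ))
      = fun t => (-1:ℂ)^n * (((Real.cos (x*t) * (1-t^2)^n : ℝ) : ℂ)
          + ((Real.sin (x*t) * (1-t^2)^n : ℝ) : ℂ) * Complex.I) := by
    funext t
    have h1 : Complex.I * x * t = ((x*t : ℝ) : ℂ) * Complex.I := by push_cast; ring
    have h2 : ((t:ℝ)^2-1)^n = (-1:ℝ)^n * (1-t^2)^n := by
      rw [show ((t:ℝ)^2-1) = -(1-t^2) by ring, neg_pow]
    rw [h1, Complex.exp_mul_I, h2]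
    push_cast [Complex.ofReal_cos, Complex.ofReal_sin]
    ring
  rw [hfun, intervalIntegral.integral_const_mul]
  congr 1
  rw [integral_add (Continuous.intervalIntegrable (by fun_prop) _ _)
    (Continuous.intervalIntegrable (by fun_prop) _ _),
    intervalIntegral.integral_mul_const, intervalIntegral.integral_ofReal, intervalIntegral.integral_ofReal, aux_odd]
  simp

open Polynomial intervalIntegral in
lemma aux_sub (n : ℕ) (x : ℝ) :
    (∫ θ in (0:ℝ)..Real.pi, Real.cos (x * Real.cos θ) * Real.sin θ ^ (2 * n + 1))
      = ∫ t in (-1:ℝ)..1, Real.cos (x*t) * (1-t^2)^n := by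
  have h := intervalIntegral.integral_comp_smul_deriv (a := (0:ℝ)) (b := Real.pi)
    (f := Real.cos) (f' := fun θ => -Real.sin θ)
    (g := fun t => Real.cos (x*t) * (1-t^2)^n)
    (fun θ _ => Real.hasDerivAt_cos θ) (by fun_prop) (by fun_prop)
  rw [Real.cos_zero, Real.cos_pi] at h
  have h2 : (fun θ : ℝ => (-Real.sin θ) • ((fun t => Real.cos (x*t) * (1-t^2)^n) ∘ Real.cos) θ)
      = fun θ => -(Real.cos (x * Real.cos θ) * Real.sin θ ^ (2 * n + 1)) := by
    funext θ
    simp only [Function.comp, smul_eq_mul]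
    rw [show Real.sin θ ^ (2*n+1) = (Real.sin θ^2)^n * Real.sin θ by
      rw [← pow_mul]; ring, Real.sin_sq]
    ring
  rw [h2, intervalIntegral.integral_neg] at h
  rw [show (∫ t in (1:ℝ)..(-1), Real.cos (x*t) * (1-t^2)^n)
      = -∫ t in (-1:ℝ)..1, Real.cos (x*t) * (1-t^2)^n from intervalIntegral.integral_symm _ _] at h
  linarith

theorem finite_fourier_legendre (n : ℕ) (x : ℝ) :
    ∫ t in (-1:ℝ)..1, Complex.exp (Complex.I * x * t) * (((legendreP n).eval t : ℝ) : ℂ)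
      = 2 * Complex.I ^ n * (sphBessel n x : ℂ) := by
  have hc : (fun t : ℝ => Complex.exp (Complex.I * x * t) * (((legendreP n).eval t : ℝ) : ℂ))
      = fun t : ℝ => (((1:ℝ) / (2 ^ n * (n.factorial : ℝ)) : ℝ) : ℂ)
          * (Complex.exp (Complex.I * x * t)
            * (((Polynomial.derivative^[n] ((Polynomial.X ^ 2 - 1 : Polynomial ℝ) ^ n)).eval t : ℝ) : ℂ)) := by
    funext t
    simp only [legendreP, Polynomial.eval_smul, smul_eq_mul, Complex.ofReal_mul]
    ring
  rw [hc, intervalIntegral.integral_const_mul, aux_iter n x n le_rfl]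
  have he : (fun t : ℝ => Complex.exp (Complex.I * x * t)
      * ((((Polynomial.X ^ 2 - 1 : Polynomial ℝ) ^ n).eval t : ℝ) : ℂ))
      = fun t : ℝ => Complex.exp (Complex.I * x * t) * (((t^2-1)^n : ℝ) : ℂ) := by
    funext t; simp
  rw [he, aux_exp n x]
  unfold sphBessel
  rw [aux_sub n x]
  set A : ℝ := ∫ t in (-1:ℝ)..1, Real.cos (x*t) * (1-t^2)^n with hA
  push_cast
  rw [show (-(Complex.I * x))^n = (-1:ℂ)^n * (Complex.I * x)^n from neg_pow _ _]
  have hne : ((-1:ℂ))^n * ((-1:ℂ))^n = 1 := by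
    rw [← mul_pow]; norm_num
  field_simp [Nat.factorial_ne_zero]
  ring_nf
  rw [mul_comm n 2, pow_mul]
  norm_num
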